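/- Let {X(τ,σ):τ,σ∈S_0} be a biadmissible family with sup_{τ,σ∈S_0} E[X(τ,σ)] < ∞. Then for every stopping time S∈S_0, the double-stopping value function coincides with the single-stopping value function of the new reward: v(S) = u(S) a.s. -/

import Mathlib

open MeasureTheory Filter Set

noncomputable section

namespace OptMultStop

variable {Ω : Type*}

/-- A real function is right-continuous with left limits (RCLL) on `[0, T]`. -/
def RCLLOn (f : ℝ → ℝ) (T : ℝ) : Prop :=
  (∀ t ∈ Set.Ico (0 : ℝ) T, ContinuousWithinAt f (Set.Ici t) t) ∧
    ∀ t ∈ Set.Ioc (0 : ℝ) T, ∃ l : ℝ, Filter.Tendsto f (nhdsWithin t (Set.Iio t)) (nhds l)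

/-- A real function is right-continuous on `[0, T)`. -/
def RCOn (f : ℝ → ℝ) (T : ℝ) : Prop :=
  ∀ t ∈ Set.Ico (0 : ℝ) T, ContinuousWithinAt f (Set.Ici t) t

/-- `τ` is a stopping time for `ℱ` taking values in `[s ·, T]`; for `s = S` a stopping
time this encodes membership in `S_S`. -/
def IsStopIn [m : MeasurableSpace Ω] (ℱ : Filtration ℝ m) (T : ℝ) (s τ : Ω → ℝ) : Prop :=
  IsStoppingTime ℱ (fun ω => (τ ω : WithTop ℝ)) ∧ (∀ ω, s ω ≤ τ ω) ∧ ∀ ω, τ ω ≤ T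

/-- Membership in `S_0`: a stopping time with values in `[0, T]`. -/
def Stop0 [m : MeasurableSpace Ω] (ℱ : Filtration ℝ m) (T : ℝ) (τ : Ω → ℝ) : Prop :=
  IsStopIn ℱ T (fun _ => (0 : ℝ)) τ

/-- `g` is an essential supremum of the family of random variables `s`. -/
def IsEssSupFam [MeasurableSpace Ω] (μ : Measure Ω) (s : Set (Ω → ℝ)) (g : Ω → ℝ) : Prop :=
  (∀ f ∈ s, f ≤ᵐ[μ] g) ∧ ∀ h : Ω → ℝ, (∀ f ∈ s, f ≤ᵐ[μ] h) → g ≤ᵐ[μ] h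

/-- `g` is an essential infimum of the family of random variables `s`. -/
def IsEssInfFam [MeasurableSpace Ω] (μ : Measure Ω) (s : Set (Ω → ℝ)) (g : Ω → ℝ) : Prop :=
  (∀ f ∈ s, g ≤ᵐ[μ] f) ∧ ∀ h : Ω → ℝ, (∀ f ∈ s, h ≤ᵐ[μ] f) → h ≤ᵐ[μ] g

/-- An `𝔽`-consistent nonlinear expectation `(E, Dom(E))` on the horizon `[0, T]`,
together with its conditional versions at stopping times, satisfying the domain
axioms (D1)-(D3), (A1)-(A4) at stopping times, and hypotheses (H0)-(H5). -/
structure FExp [m : MeasurableSpace Ω] (μ : Measure Ω) (T : ℝ) (ℱ : Filtration ℝ m) where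
  /-- the domain `Dom(E)` -/
  Dom : Set (Ω → ℝ)
  /-- `cond τ ξ` is the conditional expectation `E_τ[ξ]` at the stopping time `τ` -/
  cond : (Ω → ℝ) → (Ω → ℝ) → Ω → ℝ
  /-- `E0 ξ` is the (deterministic) value `E[ξ] = E_0[ξ]` -/
  E0 : (Ω → ℝ) → ℝ
  zero_mem : (fun _ => (0 : ℝ)) ∈ Dom
  one_mem : (fun _ => (1 : ℝ)) ∈ Dom
  /-- (H4): all constants belong to the domain -/
  const_mem : ∀ c : ℝ, (fun _ => c) ∈ Dom
  add_mem : ∀ {ξ η : Ω → ℝ}, ξ ∈ Dom → η ∈ Dom → ξ + η ∈ Dom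
  indicator_mem : ∀ {ξ : Ω → ℝ}, ξ ∈ Dom → ∀ {A : Set Ω}, MeasurableSet A →
    A.indicator ξ ∈ Dom
  sandwich_mem : ∀ {ξ η : Ω → ℝ}, η ∈ Dom → (∀ᵐ ω ∂μ, 0 ≤ ξ ω ∧ ξ ω ≤ η ω) → ξ ∈ Dom
  cond_mem : ∀ {τ ξ : Ω → ℝ}, Stop0 ℱ T τ → ξ ∈ Dom → 0 ≤ᵐ[μ] ξ → cond τ ξ ∈ Dom
  cond_nonneg : ∀ {τ ξ : Ω → ℝ}, Stop0 ℱ T τ → ξ ∈ Dom → 0 ≤ᵐ[μ] ξ → 0 ≤ᵐ[μ] cond τ ξ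
  /-- `E_τ[ξ]` is `F_τ`-measurable -/
  cond_adapted : ∀ {τ ξ : Ω → ℝ} (hτ : Stop0 ℱ T τ), ξ ∈ Dom → 0 ≤ᵐ[μ] ξ →
    Measurable[hτ.1.measurableSpace] (cond τ ξ)
  /-- monotonicity -/
  mono : ∀ {τ ξ η : Ω → ℝ}, Stop0 ℱ T τ → ξ ∈ Dom → 0 ≤ᵐ[μ] ξ → η ∈ Dom → 0 ≤ᵐ[μ] η →
    ξ ≤ᵐ[μ] η → cond τ ξ ≤ᵐ[μ] cond τ η
  /-- strict monotonicity -/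
  strict_mono : ∀ {τ ξ η : Ω → ℝ}, Stop0 ℱ T τ → ξ ∈ Dom → 0 ≤ᵐ[μ] ξ → η ∈ Dom →
    0 ≤ᵐ[μ] η → ξ ≤ᵐ[μ] η → cond τ ξ =ᵐ[μ] cond τ η → ξ =ᵐ[μ] η
  /-- time consistency -/
  time_consistent : ∀ {σ τ ξ : Ω → ℝ}, Stop0 ℱ T σ → Stop0 ℱ T τ → (∀ ω, σ ω ≤ τ ω) →
    ξ ∈ Dom → 0 ≤ᵐ[μ] ξ → cond σ (cond τ ξ) =ᵐ[μ] cond σ ξ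
  /-- zero-one law -/
  zero_one : ∀ {τ ξ : Ω → ℝ} (hτ : Stop0 ℱ T τ), ξ ∈ Dom → 0 ≤ᵐ[μ] ξ →
    ∀ {A : Set Ω}, MeasurableSet[hτ.1.measurableSpace] A →
    cond τ (A.indicator ξ) =ᵐ[μ] A.indicator (cond τ ξ)
  /-- translation invariance -/
  translation : ∀ {τ ξ η : Ω → ℝ} (hτ : Stop0 ℱ T τ), ξ ∈ Dom → 0 ≤ᵐ[μ] ξ → η ∈ Dom →
    0 ≤ᵐ[μ] η → Measurable[hτ.1.measurableSpace] η → cond τ (ξ + η) =ᵐ[μ] cond τ ξ + η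
  /-- `F_0` is trivial: `E_0[ξ]` is the constant `E0 ξ` -/
  E0_eq : ∀ {ξ : Ω → ℝ}, ξ ∈ Dom → 0 ≤ᵐ[μ] ξ →
    cond (fun _ => (0 : ℝ)) ξ =ᵐ[μ] fun _ => E0 ξ
  /-- the process `t ↦ E_t[ξ]` has RCLL paths -/
  rcll_paths : ∀ {ξ : Ω → ℝ}, ξ ∈ Dom → 0 ≤ᵐ[μ] ξ →
    ∀ᵐ ω ∂μ, RCLLOn (fun t => cond (fun _ => t) ξ ω) T
  /-- (H0) -/
  h0 : ∀ {A : Set Ω}, MeasurableSet A → 0 < μ A →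
    Tendsto (fun n : ℕ => E0 (A.indicator fun _ => (n : ℝ))) atTop atTop
  /-- (H1) -/
  h1 : ∀ {ξ : Ω → ℝ}, ξ ∈ Dom → 0 ≤ᵐ[μ] ξ → ∀ {A : ℕ → Set Ω},
    (∀ n, MeasurableSet (A n)) → Monotone A → (∀ᵐ ω ∂μ, ω ∈ ⋃ n, A n) →
    Tendsto (fun n => E0 ((A n).indicator ξ)) atTop (nhds (E0 ξ))
  /-- (H2) -/
  h2 : ∀ {ξ η : Ω → ℝ}, ξ ∈ Dom → 0 ≤ᵐ[μ] ξ → η ∈ Dom → 0 ≤ᵐ[μ] η →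
    ∀ {A : ℕ → Set Ω}, (∀ n, MeasurableSet (A n)) → Antitone A →
    (∀ᵐ ω ∂μ, ω ∉ ⋂ n, A n) →
    Tendsto (fun n => E0 (ξ + (A n).indicator η)) atTop (nhds (E0 ξ))
  /-- (H5) -/
  h5 : ∀ {ξ : ℕ → Ω → ℝ} {ζ : Ω → ℝ}, (∀ n, ξ n ∈ Dom) → (∀ n, 0 ≤ᵐ[μ] ξ n) →
    (∀ᵐ ω ∂μ, Tendsto (fun n => ξ n ω) atTop (nhds (ζ ω))) →
    (∃ C : ℝ, ∃ᶠ n in atTop, E0 (ξ n) ≤ C) → ζ ∈ Dom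

variable [m : MeasurableSpace Ω] {μ : Measure Ω} {T : ℝ} {ℱ : Filtration ℝ m}

/-- (H6): sub-additivity. -/
def FExp.Subadditive (𝔈 : FExp μ T ℱ) : Prop :=
  ∀ ⦃τ ξ η : Ω → ℝ⦄, Stop0 ℱ T τ → ξ ∈ 𝔈.Dom → 0 ≤ᵐ[μ] ξ → η ∈ 𝔈.Dom → 0 ≤ᵐ[μ] η →
    𝔈.cond τ (ξ + η) ≤ᵐ[μ] 𝔈.cond τ ξ + 𝔈.cond τ η

/-- (H7): positive homogeneity. -/
def FExp.PosHom (𝔈 : FExp μ T ℱ) : Prop :=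
  ∀ ⦃τ ξ : Ω → ℝ⦄ (l : ℝ), 0 ≤ l → Stop0 ℱ T τ → ξ ∈ 𝔈.Dom → 0 ≤ᵐ[μ] ξ →
    𝔈.cond τ (fun ω => l * ξ ω) =ᵐ[μ] fun ω => l * 𝔈.cond τ ξ ω

/-- Admissible family of rewards indexed by stopping times. -/
def Admissible (𝔈 : FExp μ T ℱ) (X : (Ω → ℝ) → Ω → ℝ) : Prop :=
  (∀ τ : Ω → ℝ, ∀ hτ : Stop0 ℱ T τ, X τ ∈ 𝔈.Dom ∧ 0 ≤ᵐ[μ] X τ ∧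
      Measurable[hτ.1.measurableSpace] (X τ)) ∧
    ∀ τ σ : Ω → ℝ, Stop0 ℱ T τ → Stop0 ℱ T σ →
      ∀ᵐ ω ∂μ, τ ω = σ ω → X τ ω = X σ ω

/-- `sup_{τ ∈ S_0} E[X(τ)] < ∞`. -/
def BddRewardE0 (𝔈 : FExp μ T ℱ) (X : (Ω → ℝ) → Ω → ℝ) : Prop :=
  ∃ C : ℝ, ∀ τ : Ω → ℝ, Stop0 ℱ T τ → 𝔈.E0 (X τ) ≤ C

/-- `v` is the value function family of the single stopping problem for the reward `X`:
`v(S) = esssup_{τ ∈ S_S} E_S[X(τ)]`. -/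
def IsValueFam (𝔈 : FExp μ T ℱ) (X v : (Ω → ℝ) → Ω → ℝ) : Prop :=
  ∀ S : Ω → ℝ, Stop0 ℱ T S →
    IsEssSupFam μ {g | ∃ τ : Ω → ℝ, IsStopIn ℱ T S τ ∧ g = 𝔈.cond S (X τ)} (v S)

/-- An `E`-supermartingale system. -/
def SupermartSys (𝔈 : FExp μ T ℱ) (h : (Ω → ℝ) → Ω → ℝ) : Prop :=
  (∀ τ : Ω → ℝ, ∀ hτ : Stop0 ℱ T τ, h τ ∈ 𝔈.Dom ∧ 0 ≤ᵐ[μ] h τ ∧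
      Measurable[hτ.1.measurableSpace] (h τ)) ∧
    ∀ τ σ : Ω → ℝ, Stop0 ℱ T τ → Stop0 ℱ T σ → (∀ᵐ ω ∂μ, τ ω ≤ σ ω) →
      𝔈.cond τ (h σ) ≤ᵐ[μ] h τ

/-- Right-continuity along stopping times in `E`-expectation (RCE). -/
def RCE (𝔈 : FExp μ T ℱ) (X : (Ω → ℝ) → Ω → ℝ) : Prop :=
  ∀ τ : Ω → ℝ, Stop0 ℱ T τ → ∀ τs : ℕ → Ω → ℝ, (∀ n, Stop0 ℱ T (τs n)) →
    (∀ᵐ ω ∂μ, Antitone (fun n => τs n ω) ∧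
      Tendsto (fun n => τs n ω) atTop (nhds (τ ω))) →
    Tendsto (fun n => 𝔈.E0 (X (τs n))) atTop (nhds (𝔈.E0 (X τ)))

/-- Left-continuity along stopping times in `E`-expectation (LCE). -/
def LCE (𝔈 : FExp μ T ℱ) (X : (Ω → ℝ) → Ω → ℝ) : Prop :=
  ∀ τ : Ω → ℝ, Stop0 ℱ T τ → ∀ τs : ℕ → Ω → ℝ, (∀ n, Stop0 ℱ T (τs n)) →
    (∀ᵐ ω ∂μ, Monotone (fun n => τs n ω) ∧
      Tendsto (fun n => τs n ω) atTop (nhds (τ ω))) →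
    Tendsto (fun n => 𝔈.E0 (X (τs n))) atTop (nhds (𝔈.E0 (X τ)))

/-- Continuity along stopping times in `E`-expectation (CE). -/
def CE (𝔈 : FExp μ T ℱ) (X : (Ω → ℝ) → Ω → ℝ) : Prop :=
  RCE 𝔈 X ∧ LCE 𝔈 X

/-- Right-continuity along stopping times (RC): a.s. pointwise convergence. -/
def RCfam (𝔈 : FExp μ T ℱ) (X : (Ω → ℝ) → Ω → ℝ) : Prop :=
  ∀ τ : Ω → ℝ, Stop0 ℱ T τ → ∀ τs : ℕ → Ω → ℝ, (∀ n, Stop0 ℱ T (τs n)) →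
    (∀ᵐ ω ∂μ, Antitone (fun n => τs n ω) ∧
      Tendsto (fun n => τs n ω) atTop (nhds (τ ω))) →
    ∀ᵐ ω ∂μ, Tendsto (fun n => X (τs n) ω) atTop (nhds (X τ ω))

/-- Biadmissible family of rewards indexed by pairs of stopping times. -/
def Biadmissible (𝔈 : FExp μ T ℱ) (X : (Ω → ℝ) → (Ω → ℝ) → Ω → ℝ) : Prop :=
  (∀ τ σ : Ω → ℝ, ∀ hτ : Stop0 ℱ T τ, ∀ hσ : Stop0 ℱ T σ,
      X τ σ ∈ 𝔈.Dom ∧ 0 ≤ᵐ[μ] X τ σ ∧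
      Measurable[(hτ.1.max hσ.1).measurableSpace] (X τ σ)) ∧
    ∀ τ σ τ' σ' : Ω → ℝ, Stop0 ℱ T τ → Stop0 ℱ T σ → Stop0 ℱ T τ' → Stop0 ℱ T σ' →
      ∀ᵐ ω ∂μ, τ ω = τ' ω → σ ω = σ' ω → X τ σ ω = X τ' σ' ω

/-- `sup_{τ,σ ∈ S_0} E[X(τ,σ)] < ∞`. -/
def BddReward2E0 (𝔈 : FExp μ T ℱ) (X : (Ω → ℝ) → (Ω → ℝ) → Ω → ℝ) : Prop :=
  ∃ C : ℝ, ∀ τ σ : Ω → ℝ, Stop0 ℱ T τ → Stop0 ℱ T σ → 𝔈.E0 (X τ σ) ≤ C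

/-- `v` is the value function family of the double stopping problem:
`v(S) = esssup_{τ₁,τ₂ ∈ S_S} E_S[X(τ₁,τ₂)]`. -/
def IsValueFam2 (𝔈 : FExp μ T ℱ) (X : (Ω → ℝ) → (Ω → ℝ) → Ω → ℝ)
    (v : (Ω → ℝ) → Ω → ℝ) : Prop :=
  ∀ S : Ω → ℝ, Stop0 ℱ T S →
    IsEssSupFam μ
      {g | ∃ τ₁ τ₂ : Ω → ℝ, IsStopIn ℱ T S τ₁ ∧ IsStopIn ℱ T S τ₂ ∧
        g = 𝔈.cond S (X τ₁ τ₂)} (v S)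

/-- `u₁(θ) = esssup_{τ₁ ∈ S_θ} E_θ[X(τ₁, θ)]`. -/
def IsU1 (𝔈 : FExp μ T ℱ) (X : (Ω → ℝ) → (Ω → ℝ) → Ω → ℝ) (u₁ : (Ω → ℝ) → Ω → ℝ) : Prop :=
  ∀ θ : Ω → ℝ, Stop0 ℱ T θ →
    IsEssSupFam μ {g | ∃ τ : Ω → ℝ, IsStopIn ℱ T θ τ ∧ g = 𝔈.cond θ (X τ θ)} (u₁ θ)

/-- `u₂(θ) = esssup_{τ₂ ∈ S_θ} E_θ[X(θ, τ₂)]`. -/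
def IsU2 (𝔈 : FExp μ T ℱ) (X : (Ω → ℝ) → (Ω → ℝ) → Ω → ℝ) (u₂ : (Ω → ℝ) → Ω → ℝ) : Prop :=
  ∀ θ : Ω → ℝ, Stop0 ℱ T θ →
    IsEssSupFam μ {g | ∃ τ : Ω → ℝ, IsStopIn ℱ T θ τ ∧ g = 𝔈.cond θ (X θ τ)} (u₂ θ)

/-- Uniform right-continuity of a biadmissible family along stopping times in
`ℰ`-expectation (URCℰ). -/
def URCE2 (ℰ : FExp μ T ℱ) (X : (Ω → ℝ) → (Ω → ℝ) → Ω → ℝ) : Prop :=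
  ∀ σ : Ω → ℝ, Stop0 ℱ T σ → ∀ σs : ℕ → Ω → ℝ, (∀ n, Stop0 ℱ T (σs n)) →
    (∀ᵐ ω ∂μ, Antitone (fun n => σs n ω) ∧
      Tendsto (fun n => σs n ω) atTop (nhds (σ ω))) →
    ∀ ε : ℝ, 0 < ε → ∃ N : ℕ, ∀ n ≥ N, ∀ τ : Ω → ℝ, Stop0 ℱ T τ →
      ℰ.E0 (fun ω => |X τ σ ω - X τ (σs n) ω|) ≤ ε ∧
      ℰ.E0 (fun ω => |X σ τ ω - X (σs n) τ ω|) ≤ ε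

/-- Uniform left-continuity of a biadmissible family along stopping times in
`ℰ`-expectation (ULCℰ). -/
def ULCE2 (ℰ : FExp μ T ℱ) (X : (Ω → ℝ) → (Ω → ℝ) → Ω → ℝ) : Prop :=
  ∀ σ : Ω → ℝ, Stop0 ℱ T σ → ∀ σs : ℕ → Ω → ℝ, (∀ n, Stop0 ℱ T (σs n)) →
    (∀ᵐ ω ∂μ, Monotone (fun n => σs n ω) ∧
      Tendsto (fun n => σs n ω) atTop (nhds (σ ω))) →
    ∀ ε : ℝ, 0 < ε → ∃ N : ℕ, ∀ n ≥ N, ∀ τ : Ω → ℝ, Stop0 ℱ T τ →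
      ℰ.E0 (fun ω => |X τ σ ω - X τ (σs n) ω|) ≤ ε ∧
      ℰ.E0 (fun ω => |X σ τ ω - X (σs n) τ ω|) ≤ ε

/-- Uniform continuity (UCℰ) of a biadmissible family. -/
def UCE2 (ℰ : FExp μ T ℱ) (X : (Ω → ℝ) → (Ω → ℝ) → Ω → ℝ) : Prop :=
  URCE2 ℰ X ∧ ULCE2 ℰ X

/-- `(E, Dom(E))` is dominated by `(Ẽ, Dom(Ẽ))`. -/
def Dominated (𝔈 𝔉 : FExp μ T ℱ) : Prop :=
  𝔈.Dom ⊆ 𝔉.Dom ∧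
    ∀ τ : Ω → ℝ, Stop0 ℱ T τ → ∀ ξ η : Ω → ℝ, ξ ∈ 𝔈.Dom → η ∈ 𝔈.Dom →
      ∀ᵐ ω ∂μ, 𝔈.cond τ (ξ + η) ω - 𝔈.cond τ η ω ≤ 𝔉.cond τ ξ ω

/-- The filtration contains all `μ`-null sets (part of the usual conditions). -/
def CompleteFiltration (μ : Measure Ω) (ℱ : Filtration ℝ m) : Prop :=
  ∀ s : Set Ω, μ s = 0 → ∀ t : ℝ, MeasurableSet[ℱ t] s

/-- The filtration is right-continuous (part of the usual conditions). -/
def RightContinuousFiltration (ℱ : Filtration ℝ m) : Prop :=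
  ∀ t : ℝ, (ℱ t : MeasurableSpace Ω) = ⨅ u ∈ Set.Ioi t, ℱ u

/-- A `d`-tuple of stopping times, all in `S_s`. -/
def StopVec (ℱ : Filtration ℝ m) (T : ℝ) (s : Ω → ℝ) {d : ℕ} (τ : Fin d → Ω → ℝ) : Prop :=
  ∀ i, IsStopIn ℱ T s (τ i)

/-- A `d`-admissible family of rewards. -/
def DAdmissible (𝔈 : FExp μ T ℱ) {d : ℕ} (X : (Fin d → Ω → ℝ) → Ω → ℝ) : Prop :=
  (∀ τ : Fin d → Ω → ℝ, StopVec ℱ T (fun _ => (0 : ℝ)) τ →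
      X τ ∈ 𝔈.Dom ∧ 0 ≤ᵐ[μ] X τ ∧
      ∀ h : IsStoppingTime ℱ fun ω => (((⨆ i, τ i ω : ℝ)) : WithTop ℝ),
        Measurable[h.measurableSpace] (X τ)) ∧
    ∀ τ σ : Fin d → Ω → ℝ, StopVec ℱ T (fun _ => (0 : ℝ)) τ →
      StopVec ℱ T (fun _ => (0 : ℝ)) σ →
      ∀ᵐ ω ∂μ, (∀ i, τ i ω = σ i ω) → X τ ω = X σ ω

/-- `sup_{τ ∈ S_0^d} E[X(τ)] < ∞`. -/
def BddRewardDE0 (𝔈 : FExp μ T ℱ) {d : ℕ} (X : (Fin d → Ω → ℝ) → Ω → ℝ) : Prop :=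
  ∃ C : ℝ, ∀ τ : Fin d → Ω → ℝ, StopVec ℱ T (fun _ => (0 : ℝ)) τ → 𝔈.E0 (X τ) ≤ C

/-- `v` is the value function family of the `d`-stopping problem:
`v(S) = esssup_{τ ∈ S_S^d} E_S[X(τ)]`. -/
def IsValueFamD (𝔈 : FExp μ T ℱ) {d : ℕ} (X : (Fin d → Ω → ℝ) → Ω → ℝ)
    (v : (Ω → ℝ) → Ω → ℝ) : Prop :=
  ∀ S : Ω → ℝ, Stop0 ℱ T S →
    IsEssSupFam μ
      {g | ∃ τ : Fin d → Ω → ℝ, StopVec ℱ T S τ ∧ g = 𝔈.cond S (X τ)} (v S)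

/-- `u^{(i)}(θ) = esssup_{τ ∈ S_θ^{d-1}} E_θ[X^{(i)}(τ, θ)]`, where `X^{(i)}(τ, θ)`
inserts `θ` in the `i`-th slot. -/
def IsUi (𝔈 : FExp μ T ℱ) {d : ℕ} (X : (Fin (d + 1) → Ω → ℝ) → Ω → ℝ)
    (ui : Fin (d + 1) → (Ω → ℝ) → Ω → ℝ) : Prop :=
  ∀ i : Fin (d + 1), ∀ θ : Ω → ℝ, Stop0 ℱ T θ →
    IsEssSupFam μ
      {g | ∃ τ : Fin d → Ω → ℝ, StopVec ℱ T θ τ ∧ g = 𝔈.cond θ (X (i.insertNth θ τ))}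
      (ui i θ)

/-- Uniform continuity (UCE) of a `d`-admissible family along monotone sequences of
stopping times. -/
def UCED (𝔈 : FExp μ T ℱ) {d : ℕ} (X : (Fin (d + 1) → Ω → ℝ) → Ω → ℝ) : Prop :=
  ∀ i : Fin (d + 1), ∀ S : Ω → ℝ, Stop0 ℱ T S → ∀ Ss : ℕ → Ω → ℝ,
    (∀ n, Stop0 ℱ T (Ss n)) →
    ((∀ᵐ ω ∂μ, Monotone fun n => Ss n ω) ∨ (∀ᵐ ω ∂μ, Antitone fun n => Ss n ω)) →
    (∀ᵐ ω ∂μ, Tendsto (fun n => Ss n ω) atTop (nhds (S ω))) →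
    ∀ ε : ℝ, 0 < ε → ∃ N : ℕ, ∀ n ≥ N, ∀ θ : Fin d → Ω → ℝ,
      StopVec ℱ T (fun _ => (0 : ℝ)) θ →
      𝔈.E0 (fun ω => |X (i.insertNth (Ss n) θ) ω - X (i.insertNth S θ) ω|) ≤ ε


/-! ### Auxiliary lemmas for Statement 10 -/

section Aux

lemma stop0_zero (hT : 0 ≤ T) : Stop0 ℱ T (fun _ => (0 : ℝ)) :=
  ⟨isStoppingTime_const ℱ 0, fun _ => le_rfl, fun _ => hT⟩

lemma stop0_of_isStopIn {S τ : Ω → ℝ} (hS : Stop0 ℱ T S) (h : IsStopIn ℱ T S τ) :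
    Stop0 ℱ T τ :=
  ⟨h.1, fun ω => (hS.2.1 ω).trans (h.2.1 ω), h.2.2⟩

lemma isStopIn_refl {τ : Ω → ℝ} (hτ : Stop0 ℱ T τ) : IsStopIn ℱ T τ τ :=
  ⟨hτ.1, fun _ => le_rfl, hτ.2.2⟩

/-- piecewise combination of two functions along a set. -/
noncomputable def pc (A : Set Ω) (ρ σ : Ω → ℝ) : Ω → ℝ :=
  fun ω => open Classical in if ω ∈ A then ρ ω else σ ω

lemma pc_of_mem {A : Set Ω} {ρ σ : Ω → ℝ} {ω : Ω} (h : ω ∈ A) : pc A ρ σ ω = ρ ω := by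
  simp only [pc]; rw [if_pos h]

lemma pc_of_not_mem {A : Set Ω} {ρ σ : Ω → ℝ} {ω : Ω} (h : ω ∉ A) : pc A ρ σ ω = σ ω := by
  simp only [pc]; rw [if_neg h]

@[simp] lemma pc_univ {ρ σ : Ω → ℝ} : pc (Set.univ : Set Ω) ρ σ = ρ := by
  funext ω; exact pc_of_mem (Set.mem_univ ω)

@[simp] lemma pc_empty {ρ σ : Ω → ℝ} : pc (∅ : Set Ω) ρ σ = σ := by
  funext ω; exact pc_of_not_mem (Set.notMem_empty ω)

/-- Pasting of stopping times along a set in `F_τ`. -/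
lemma isStopIn_pc {τ ρ σ : Ω → ℝ} (hτ : Stop0 ℱ T τ)
    (hρ : IsStopIn ℱ T τ ρ) (hσ : IsStopIn ℱ T τ σ) {A : Set Ω}
    (hA : MeasurableSet[hτ.1.measurableSpace] A) :
    IsStopIn ℱ T τ (pc A ρ σ) := by
  have hA' : ∀ t : ℝ, MeasurableSet[ℱ t] (A ∩ {ω | τ ω ≤ t}) := fun t => by
    have h := ((hτ.1.measurableSet _).mp hA).2 t
    simp only [WithTop.coe_le_coe] at h
    exact h
  have hAc' : ∀ t : ℝ, MeasurableSet[ℱ t] (Aᶜ ∩ {ω | τ ω ≤ t}) := fun t => by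
    have h := ((hτ.1.measurableSet _).mp hA.compl).2 t
    simp only [WithTop.coe_le_coe] at h
    exact h
  refine ⟨?_, fun ω => ?_, fun ω => ?_⟩
  · intro t
    have hset : {ω | pc A ρ σ ω ≤ t}
        = (A ∩ {ω | τ ω ≤ t}) ∩ {ω | ρ ω ≤ t} ∪ (Aᶜ ∩ {ω | τ ω ≤ t}) ∩ {ω | σ ω ≤ t} := by
      ext ω
      by_cases h : ω ∈ A
      · simp only [Set.mem_setOf_eq, pc_of_mem h, Set.mem_union, Set.mem_inter_iff,
          Set.mem_compl_iff, h, not_true_eq_false, false_and, or_false, true_and]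
        exact ⟨fun hh => ⟨(hρ.2.1 ω).trans hh, hh⟩, fun hh => hh.2⟩
      · simp only [Set.mem_setOf_eq, pc_of_not_mem h, Set.mem_union, Set.mem_inter_iff,
          Set.mem_compl_iff, h, not_false_eq_true, true_and, false_and, false_or]
        exact ⟨fun hh => ⟨(hσ.2.1 ω).trans hh, hh⟩, fun hh => hh.2⟩
    show MeasurableSet[ℱ t] {ω | ((pc A ρ σ ω : ℝ) : WithTop ℝ) ≤ (t : WithTop ℝ)}
    simp only [WithTop.coe_le_coe]
    rw [hset]
    have hρt := hρ.1 t
    have hσt := hσ.1 t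
    simp only [WithTop.coe_le_coe] at hρt hσt
    exact ((hA' t).inter hρt).union ((hAc' t).inter hσt)
  · by_cases h : ω ∈ A
    · rw [pc_of_mem h]; exact hρ.2.1 ω
    · rw [pc_of_not_mem h]; exact hσ.2.1 ω
  · by_cases h : ω ∈ A
    · rw [pc_of_mem h]; exact hρ.2.2 ω
    · rw [pc_of_not_mem h]; exact hσ.2.2 ω

variable [IsProbabilityMeasure μ]

lemma const_le_const_of_ae {c d : ℝ} (h : (fun _ : Ω => c) ≤ᵐ[μ] fun _ => d) : c ≤ d := by
  haveI : (MeasureTheory.ae μ).NeBot := ae_neBot.mpr (IsProbabilityMeasure.ne_zero μ)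
  obtain ⟨_, hω⟩ := h.exists
  exact hω

lemma const_eq_const_of_ae {c d : ℝ} (h : (fun _ : Ω => c) =ᵐ[μ] fun _ => d) : c = d :=
  le_antisymm (const_le_const_of_ae h.le) (const_le_const_of_ae h.symm.le)

namespace FExp

variable (𝔈 : FExp μ T ℱ)

lemma cond_congr {τ ξ η : Ω → ℝ} (hτ : Stop0 ℱ T τ)
    (hξ : ξ ∈ 𝔈.Dom) (hξ0 : 0 ≤ᵐ[μ] ξ) (hη : η ∈ 𝔈.Dom) (hη0 : 0 ≤ᵐ[μ] η)
    (h : ξ =ᵐ[μ] η) : 𝔈.cond τ ξ =ᵐ[μ] 𝔈.cond τ η :=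
  (𝔈.mono hτ hξ hξ0 hη hη0 h.le).antisymm (𝔈.mono hτ hη hη0 hξ hξ0 h.symm.le)

lemma E0_mono (hT0 : 0 ≤ T) {ξ η : Ω → ℝ}
    (hξ : ξ ∈ 𝔈.Dom) (hξ0 : 0 ≤ᵐ[μ] ξ) (hη : η ∈ 𝔈.Dom) (hη0 : 0 ≤ᵐ[μ] η)
    (h : ξ ≤ᵐ[μ] η) : 𝔈.E0 ξ ≤ 𝔈.E0 η := by
  have h1 := 𝔈.mono (stop0_zero hT0) hξ hξ0 hη hη0 h
  have e1 := 𝔈.E0_eq hξ hξ0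
  have e2 := 𝔈.E0_eq hη hη0
  refine const_le_const_of_ae (μ := μ) ?_
  filter_upwards [h1, e1, e2] with ω h1 e1 e2
  calc 𝔈.E0 ξ = 𝔈.cond (fun _ => 0) ξ ω := e1.symm
    _ ≤ 𝔈.cond (fun _ => 0) η ω := h1
    _ = 𝔈.E0 η := e2

lemma E0_congr (hT0 : 0 ≤ T) {ξ η : Ω → ℝ}
    (hξ : ξ ∈ 𝔈.Dom) (hξ0 : 0 ≤ᵐ[μ] ξ) (hη : η ∈ 𝔈.Dom) (hη0 : 0 ≤ᵐ[μ] η)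
    (h : ξ =ᵐ[μ] η) : 𝔈.E0 ξ = 𝔈.E0 η :=
  le_antisymm (𝔈.E0_mono hT0 hξ hξ0 hη hη0 h.le) (𝔈.E0_mono hT0 hη hη0 hξ hξ0 h.symm.le)

lemma E0_cond (hT0 : 0 ≤ T) {τ ξ : Ω → ℝ} (hτ : Stop0 ℱ T τ)
    (hξ : ξ ∈ 𝔈.Dom) (hξ0 : 0 ≤ᵐ[μ] ξ) : 𝔈.E0 (𝔈.cond τ ξ) = 𝔈.E0 ξ := by
  have htc := 𝔈.time_consistent (stop0_zero hT0) hτ (fun ω => hτ.2.1 ω) hξ hξ0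
  have e1 := 𝔈.E0_eq (𝔈.cond_mem hτ hξ hξ0) (𝔈.cond_nonneg hτ hξ hξ0)
  have e2 := 𝔈.E0_eq hξ hξ0
  refine const_eq_const_of_ae (μ := μ) ?_
  filter_upwards [htc, e1, e2] with ω htc e1 e2
  rw [← e1, htc, e2]

lemma E0_add_const (hT0 : 0 ≤ T) {ξ : Ω → ℝ}
    (hξ : ξ ∈ 𝔈.Dom) (hξ0 : 0 ≤ᵐ[μ] ξ) {c : ℝ} (hc : 0 ≤ c) :
    𝔈.E0 (ξ + fun _ => c) = 𝔈.E0 ξ + c := by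
  have hcd : (fun _ : Ω => c) ∈ 𝔈.Dom := 𝔈.const_mem c
  have hc0 : 0 ≤ᵐ[μ] (fun _ : Ω => c) := Filter.Eventually.of_forall fun _ => hc
  have htr := 𝔈.translation (stop0_zero hT0) hξ hξ0 hcd hc0 measurable_const
  have hsd : ξ + (fun _ : Ω => c) ∈ 𝔈.Dom := 𝔈.add_mem hξ hcd
  have hs0 : 0 ≤ᵐ[μ] (ξ + fun _ : Ω => c) := by
    filter_upwards [hξ0] with ω hω
    have : (ξ + fun _ : Ω => c) ω = ξ ω + c := rfl
    rw [this]; exact add_nonneg hω hc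
  have e1 := 𝔈.E0_eq hsd hs0
  have e2 := 𝔈.E0_eq hξ hξ0
  refine const_eq_const_of_ae (μ := μ) ?_
  filter_upwards [htr, e1, e2] with ω htr e1 e2
  have h3 : (𝔈.cond (fun _ => (0:ℝ)) ξ + fun _ : Ω => c) ω = 𝔈.cond (fun _ => (0:ℝ)) ξ ω + c := rfl
  rw [← e1, htr, h3, e2]

end FExp

lemma integrable_arctan_comp {f : Ω → ℝ} (hf : AEMeasurable f μ) :
    Integrable (fun ω => Real.arctan (f ω)) μ := by
  refine (integrable_const (Real.pi / 2)).mono'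
    ((Real.continuous_arctan.measurable.comp_aemeasurable hf).aestronglyMeasurable) ?_
  refine Filter.Eventually.of_forall fun ω => ?_
  rw [Real.norm_eq_abs, abs_le]
  exact ⟨(Real.neg_pi_div_two_lt_arctan _).le, (Real.arctan_lt_pi_div_two _).le⟩

/-- Approximation of an essential supremum of an upward-directed family of measurable
functions by an a.e. increasing sequence from the family. -/
lemma exists_monotone_seq_isEssSupFam {𝒢 : Set (Ω → ℝ)} (hne : 𝒢.Nonempty)
    (hmeas : ∀ f ∈ 𝒢, Measurable f)
    (hdir : ∀ f ∈ 𝒢, ∀ g ∈ 𝒢, ∃ h, h ∈ 𝒢 ∧ (fun ω => max (f ω) (g ω)) ≤ᵐ[μ] h)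
    {w : Ω → ℝ} (hw : IsEssSupFam μ 𝒢 w) :
    ∃ F : ℕ → Ω → ℝ, (∀ n, F n ∈ 𝒢) ∧
      ∀ᵐ ω ∂μ, Monotone (fun n => F n ω) ∧
        Tendsto (fun n => F n ω) atTop (nhds (w ω)) := by
  classical
  set I : (Ω → ℝ) → ℝ := fun f => ∫ ω, Real.arctan (f ω) ∂μ with hIdef
  have hImono : ∀ f g : Ω → ℝ, AEMeasurable f μ → AEMeasurable g μ → f ≤ᵐ[μ] g →
      I f ≤ I g := by
    intro f g hf hg hle
    refine integral_mono_ae (integrable_arctan_comp hf) (integrable_arctan_comp hg) ?_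
    filter_upwards [hle] with ω h using Real.arctan_strictMono.monotone h
  have hIub : ∀ f ∈ 𝒢, I f ≤ Real.pi / 2 := by
    intro f hf
    calc I f ≤ ∫ _, Real.pi / 2 ∂μ :=
          integral_mono_ae (integrable_arctan_comp (hmeas f hf).aemeasurable)
            (integrable_const _)
            (Filter.Eventually.of_forall fun ω => (Real.arctan_lt_pi_div_two _).le)
      _ = Real.pi / 2 := by simp
  have hbdd : BddAbove (I '' 𝒢) := ⟨Real.pi / 2, by rintro x ⟨f, hf, rfl⟩; exact hIub f hf⟩
  set s := sSup (I '' 𝒢) with hsdef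
  have hglt : ∀ n : ℕ, ∃ g, g ∈ 𝒢 ∧ s - 1 / (n + 1) < I g := by
    intro n
    have hlt : s - 1 / (n + 1 : ℝ) < s := sub_lt_self _ (by positivity)
    obtain ⟨x, ⟨f, hf, rfl⟩, hx⟩ := exists_lt_of_lt_csSup (hne.image I) hlt
    exact ⟨f, hf, hx⟩
  choose g hg hgI using hglt
  have hdir' : ∀ f g : Ω → ℝ, ∃ h, f ∈ 𝒢 → g ∈ 𝒢 →
      h ∈ 𝒢 ∧ (fun ω => max (f ω) (g ω)) ≤ᵐ[μ] h := by
    intro f g'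
    by_cases hf : f ∈ 𝒢
    · by_cases hg' : g' ∈ 𝒢
      · obtain ⟨h, hh⟩ := hdir f hf g' hg'; exact ⟨h, fun _ _ => hh⟩
      · exact ⟨f, fun _ h => absurd h hg'⟩
    · exact ⟨f, fun h => absurd h hf⟩
  choose D hD using hdir'
  set F : ℕ → Ω → ℝ := fun n => Nat.rec (g 0) (fun n Fn => D Fn (g (n + 1))) n with hFdef
  have hFsucc : ∀ n, F (n + 1) = D (F n) (g (n + 1)) := fun n => rfl
  have hFmem : ∀ n, F n ∈ 𝒢 := by
    intro n; induction n with
    | zero => exact hg 0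
    | succ n ih => rw [hFsucc]; exact (hD _ _ ih (hg (n + 1))).1
  have hFle : ∀ n, (fun ω => max (F n ω) (g (n + 1) ω)) ≤ᵐ[μ] F (n + 1) := by
    intro n; rw [hFsucc]; exact (hD _ _ (hFmem n) (hg (n + 1))).2
  have hFmeasn : ∀ n, Measurable (F n) := fun n => hmeas _ (hFmem n)
  have hIgF : ∀ n, s - 1 / (n + 1) < I (F n) := by
    intro n
    cases n with
    | zero => exact hgI 0
    | succ n =>
      refine lt_of_lt_of_le (hgI (n + 1)) ?_
      refine hImono _ _ (hmeas _ (hg (n + 1))).aemeasurable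
        (hFmeasn (n + 1)).aemeasurable ?_
      filter_upwards [hFle n] with ω h
      exact le_trans (le_max_right _ _) h
  have hIFle : ∀ n, I (F n) ≤ s := fun n => le_csSup hbdd ⟨F n, hFmem n, rfl⟩
  have hFstep : ∀ n, F n ≤ᵐ[μ] F (n + 1) := by
    intro n
    filter_upwards [hFle n] with ω h
    exact le_trans (le_max_left _ _) h
  have hFub : ∀ n, F n ≤ᵐ[μ] w := fun n => hw.1 _ (hFmem n)
  have hae : ∀ᵐ ω ∂μ, (∀ n, F n ω ≤ F (n + 1) ω) ∧ ∀ n, F n ω ≤ w ω := by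
    rw [eventually_and]
    exact ⟨ae_all_iff.mpr hFstep, ae_all_iff.mpr hFub⟩
  set L : Ω → ℝ := fun ω => ⨆ n, F n ω with hLdef
  have haeT : ∀ᵐ ω ∂μ, Monotone (fun n => F n ω) ∧
      Tendsto (fun n => F n ω) atTop (nhds (L ω)) ∧ L ω ≤ w ω := by
    filter_upwards [hae] with ω h
    have hmon : Monotone fun n => F n ω := monotone_nat_of_le_succ h.1
    have hb : BddAbove (Set.range fun n => F n ω) :=
      ⟨w ω, by rintro x ⟨n, rfl⟩; exact h.2 n⟩
    exact ⟨hmon, tendsto_atTop_ciSup hmon hb, ciSup_le h.2⟩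
  have hLmeas : AEMeasurable L μ :=
    aemeasurable_of_tendsto_metrizable_ae' (fun n => (hFmeasn n).aemeasurable)
      (haeT.mono fun ω h => h.2.1)
  have harctan_bound : ∀ (f : Ω → ℝ) (n : ℕ),
      ∀ᵐ ω ∂μ, ‖Real.arctan (f ω)‖ ≤ Real.pi / 2 := by
    intro f n
    refine Filter.Eventually.of_forall fun ω => ?_
    rw [Real.norm_eq_abs, abs_le]
    exact ⟨(Real.neg_pi_div_two_lt_arctan _).le, (Real.arctan_lt_pi_div_two _).le⟩
  have hIFtend : Tendsto (fun n => I (F n)) atTop (nhds (∫ ω, Real.arctan (L ω) ∂μ)) := by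
    refine tendsto_integral_of_dominated_convergence (fun _ => Real.pi / 2)
      (fun n => (Real.continuous_arctan.measurable.comp (hFmeasn n)).aestronglyMeasurable)
      (integrable_const _) (fun n => harctan_bound (F n) n) ?_
    filter_upwards [haeT] with ω h
    exact (Real.continuous_arctan.tendsto (L ω)).comp h.2.1
  have hlower : Tendsto (fun n : ℕ => s - 1 / (n + 1 : ℝ)) atTop (nhds s) := by
    have := tendsto_one_div_add_atTop_nhds_zero_nat (𝕜 := ℝ)
    simpa using tendsto_const_nhds.sub this
  have hIs : Tendsto (fun n => I (F n)) atTop (nhds s) :=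
    tendsto_of_tendsto_of_tendsto_of_le_of_le hlower tendsto_const_nhds
      (fun n => (hIgF n).le) hIFle
  have hIL : ∫ ω, Real.arctan (L ω) ∂μ = s := tendsto_nhds_unique hIFtend hIs
  have hub : ∀ f ∈ 𝒢, f ≤ᵐ[μ] L := by
    intro f hf
    have hfm : Measurable f := hmeas f hf
    have hMmeas : AEMeasurable (fun ω => max (f ω) (L ω)) μ := hfm.aemeasurable.max hLmeas
    have htendM : Tendsto (fun n => I (fun ω => max (f ω) (F n ω))) atTop
        (nhds (∫ ω, Real.arctan (max (f ω) (L ω)) ∂μ)) := by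
      refine tendsto_integral_of_dominated_convergence (fun _ => Real.pi / 2)
        (fun n => (Real.continuous_arctan.measurable.comp
          (hfm.max (hFmeasn n))).aestronglyMeasurable)
        (integrable_const _) (fun n => harctan_bound _ n) ?_
      filter_upwards [haeT] with ω h
      exact (Real.continuous_arctan.tendsto _).comp (tendsto_const_nhds.max h.2.1)
    have hMle : ∀ n, I (fun ω => max (f ω) (F n ω)) ≤ s := by
      intro n
      obtain ⟨h, hh, hle⟩ := hdir f hf (F n) (hFmem n)
      exact le_trans (hImono _ _ (hfm.max (hFmeasn n)).aemeasurable
        (hmeas _ hh).aemeasurable hle) (le_csSup hbdd ⟨h, hh, rfl⟩)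
    have hMs : ∫ ω, Real.arctan (max (f ω) (L ω)) ∂μ ≤ s :=
      le_of_tendsto htendM (Filter.Eventually.of_forall hMle)
    have hintL := integrable_arctan_comp hLmeas
    have hintM := integrable_arctan_comp hMmeas
    have hptle : ∀ ω, Real.arctan (L ω) ≤ Real.arctan (max (f ω) (L ω)) := fun ω =>
      Real.arctan_strictMono.monotone (le_max_right _ _)
    have hzero : ∫ ω, (Real.arctan (max (f ω) (L ω)) - Real.arctan (L ω)) ∂μ = 0 := by
      rw [integral_sub hintM hintL]
      have h1 : ∫ ω, Real.arctan (L ω) ∂μ ≤ ∫ ω, Real.arctan (max (f ω) (L ω)) ∂μ :=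
        integral_mono_ae hintL hintM (Filter.Eventually.of_forall hptle)
      rw [hIL] at h1 ⊢
      linarith
    have hae0 := (integral_eq_zero_iff_of_nonneg_ae
      (Filter.Eventually.of_forall fun ω => sub_nonneg.mpr (hptle ω))
      (hintM.sub hintL)).mp hzero
    filter_upwards [hae0] with ω h
    have h1 : Real.arctan (max (f ω) (L ω)) = Real.arctan (L ω) := by
      have : Real.arctan (max (f ω) (L ω)) - Real.arctan (L ω) = 0 := h
      linarith
    exact max_eq_right_iff.mp (Real.arctan_injective h1)
  have hwL : w ≤ᵐ[μ] L := hw.2 L hub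
  refine ⟨F, hFmem, ?_⟩
  filter_upwards [haeT, hwL] with ω h hwl
  have hwe : w ω = L ω := le_antisymm hwl h.2.2
  rw [hwe]
  exact ⟨h.1, h.2.1⟩

namespace FExp

variable (𝔈 : FExp μ T ℱ)

/-- Monotone convergence for `E₀`, derived from (H1) and translation invariance. -/
lemma e0_tendsto (hT0 : 0 ≤ T) {ξs : ℕ → Ω → ℝ} {ξ : Ω → ℝ}
    (hdom : ∀ n, ξs n ∈ 𝔈.Dom) (hnn : ∀ n, 0 ≤ᵐ[μ] ξs n)
    (hmeas : ∀ n, Measurable (ξs n)) (hξ : ξ ∈ 𝔈.Dom) (hξ0 : 0 ≤ᵐ[μ] ξ)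
    (hξm : Measurable ξ)
    (hconv : ∀ᵐ ω ∂μ, Monotone (fun n => ξs n ω) ∧
      Tendsto (fun n => ξs n ω) atTop (nhds (ξ ω))) :
    Tendsto (fun n => 𝔈.E0 (ξs n)) atTop (nhds (𝔈.E0 ξ)) := by
  have hlen : ∀ n, ξs n ≤ᵐ[μ] ξ := by
    intro n
    filter_upwards [hconv] with ω h
    exact ge_of_tendsto h.2 (Filter.eventually_atTop.mpr ⟨n, fun m hm => h.1 hm⟩)
  have hcmono : Monotone fun n => 𝔈.E0 (ξs n) := by
    refine monotone_nat_of_le_succ fun n => ?_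
    refine 𝔈.E0_mono hT0 (hdom n) (hnn n) (hdom (n + 1)) (hnn (n + 1)) ?_
    filter_upwards [hconv] with ω h
    exact h.1 (Nat.le_succ n)
  have hcb : ∀ n, 𝔈.E0 (ξs n) ≤ 𝔈.E0 ξ := fun n =>
    𝔈.E0_mono hT0 (hdom n) (hnn n) hξ hξ0 (hlen n)
  have hbdd : BddAbove (Set.range fun n => 𝔈.E0 (ξs n)) :=
    ⟨𝔈.E0 ξ, by rintro x ⟨n, rfl⟩; exact hcb n⟩
  set l := ⨆ n, 𝔈.E0 (ξs n) with hldef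
  have hlten : Tendsto (fun n => 𝔈.E0 (ξs n)) atTop (nhds l) :=
    tendsto_atTop_ciSup hcmono hbdd
  have hle : ∀ n, 𝔈.E0 (ξs n) ≤ l := fun n => le_ciSup hbdd n
  have hkey : ∀ ε : ℝ, 0 < ε → 𝔈.E0 ξ ≤ l + ε := by
    intro ε hε
    set Mo : Set Ω := ⋂ n, {ω | ξs n ω ≤ ξs (n + 1) ω} with hModef
    have hMoMeas : MeasurableSet Mo :=
      MeasurableSet.iInter fun n => measurableSet_le (hmeas n) (hmeas (n + 1))
    set A : ℕ → Set Ω := fun n => Mo ∩ {ω | ξ ω ≤ ξs n ω + ε} with hAdef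
    have hAmeas : ∀ n, MeasurableSet (A n) := fun n =>
      hMoMeas.inter (measurableSet_le hξm ((hmeas n).add measurable_const))
    have hAmono : Monotone A := by
      intro n m hnm ω hω
      refine ⟨hω.1, ?_⟩
      have hmono : Monotone fun k => ξs k ω :=
        monotone_nat_of_le_succ fun k => Set.mem_iInter.mp hω.1 k
      have h2 : ξ ω ≤ ξs n ω + ε := hω.2
      have h3 : ξs n ω ≤ ξs m ω := hmono hnm
      show ξ ω ≤ ξs m ω + ε
      linarith
    have hAunion : ∀ᵐ ω ∂μ, ω ∈ ⋃ n, A n := by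
      filter_upwards [hconv] with ω h
      have hMo : ω ∈ Mo := Set.mem_iInter.mpr fun n => h.1 (Nat.le_succ n)
      obtain ⟨n, hn⟩ := (h.2.eventually (eventually_gt_nhds
        (show ξ ω - ε < ξ ω by linarith))).exists
      exact Set.mem_iUnion.mpr ⟨n, hMo, by simp only [Set.mem_setOf_eq]; linarith⟩
    have hH1 := 𝔈.h1 hξ hξ0 hAmeas hAmono hAunion
    have hub : ∀ n, 𝔈.E0 ((A n).indicator ξ) ≤ l + ε := by
      intro n
      have hile : (A n).indicator ξ ≤ᵐ[μ] ξs n + fun _ => ε := by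
        filter_upwards [hnn n] with ω hω
        by_cases hA : ω ∈ A n
        · rw [Set.indicator_of_mem hA]
          have : ξ ω ≤ ξs n ω + ε := hA.2
          exact this
        · rw [Set.indicator_of_notMem hA]
          have h4 : (ξs n + fun _ : Ω => ε) ω = ξs n ω + ε := rfl
          rw [h4]
          have h5 : (0 : ℝ) ≤ ξs n ω := hω
          linarith
      have hidom : (A n).indicator ξ ∈ 𝔈.Dom := 𝔈.indicator_mem hξ (hAmeas n)
      have hinn : 0 ≤ᵐ[μ] (A n).indicator ξ := by
        filter_upwards [hξ0] with ω hω
        exact Set.indicator_apply_nonneg fun _ => hω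
      have hsd : ξs n + (fun _ : Ω => ε) ∈ 𝔈.Dom := 𝔈.add_mem (hdom n) (𝔈.const_mem ε)
      have hs0 : 0 ≤ᵐ[μ] (ξs n + fun _ : Ω => ε) := by
        filter_upwards [hnn n] with ω hω
        have : (ξs n + fun _ : Ω => ε) ω = ξs n ω + ε := rfl
        rw [this]; linarith
      calc 𝔈.E0 ((A n).indicator ξ) ≤ 𝔈.E0 (ξs n + fun _ => ε) :=
            𝔈.E0_mono hT0 hidom hinn hsd hs0 hile
        _ = 𝔈.E0 (ξs n) + ε := 𝔈.E0_add_const hT0 (hdom n) (hnn n) hε.le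
        _ ≤ l + ε := by linarith [hle n]
    exact le_of_tendsto hH1 (Filter.Eventually.of_forall hub)
  have h1 : 𝔈.E0 ξ ≤ l := le_of_forall_pos_le_add hkey
  have h2 : l ≤ 𝔈.E0 ξ := ciSup_le hcb
  have : l = 𝔈.E0 ξ := le_antisymm h2 h1
  rwa [this] at hlten

/-- Monotone convergence for conditional `F`-expectations at a stopping time,
derived from the `E₀`-level result via strict monotonicity. -/
lemma cond_tendsto (hT0 : 0 ≤ T) {S : Ω → ℝ} (hS : Stop0 ℱ T S)
    {ξs : ℕ → Ω → ℝ} {ξ : Ω → ℝ}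
    (hdom : ∀ n, ξs n ∈ 𝔈.Dom) (hnn : ∀ n, 0 ≤ᵐ[μ] ξs n)
    (hmeas : ∀ n, Measurable (ξs n)) (hξ : ξ ∈ 𝔈.Dom) (hξ0 : 0 ≤ᵐ[μ] ξ)
    (hξm : Measurable ξ)
    (hconv : ∀ᵐ ω ∂μ, Monotone (fun n => ξs n ω) ∧
      Tendsto (fun n => ξs n ω) atTop (nhds (ξ ω))) :
    ∀ᵐ ω ∂μ, Tendsto (fun n => 𝔈.cond S (ξs n) ω) atTop (nhds (𝔈.cond S ξ ω)) := by
  have hlen : ∀ n, ξs n ≤ᵐ[μ] ξ := by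
    intro n
    filter_upwards [hconv] with ω h
    exact ge_of_tendsto h.2 (Filter.eventually_atTop.mpr ⟨n, fun m hm => h.1 hm⟩)
  set ζ : ℕ → Ω → ℝ := fun n => 𝔈.cond S (ξs n) with hζdef
  have hζdom : ∀ n, ζ n ∈ 𝔈.Dom := fun n => 𝔈.cond_mem hS (hdom n) (hnn n)
  have hζnn : ∀ n, 0 ≤ᵐ[μ] ζ n := fun n => 𝔈.cond_nonneg hS (hdom n) (hnn n)
  have hζmeas : ∀ n, Measurable (ζ n) := fun n =>
    (𝔈.cond_adapted hS (hdom n) (hnn n)).mono hS.1.measurableSpace_le le_rfl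
  have hedom : 𝔈.cond S ξ ∈ 𝔈.Dom := 𝔈.cond_mem hS hξ hξ0
  have henn : 0 ≤ᵐ[μ] 𝔈.cond S ξ := 𝔈.cond_nonneg hS hξ hξ0
  have hζstep : ∀ n, ζ n ≤ᵐ[μ] ζ (n + 1) := by
    intro n
    refine 𝔈.mono hS (hdom n) (hnn n) (hdom (n + 1)) (hnn (n + 1)) ?_
    filter_upwards [hconv] with ω h
    exact h.1 (Nat.le_succ n)
  have hζle : ∀ n, ζ n ≤ᵐ[μ] 𝔈.cond S ξ := fun n =>
    𝔈.mono hS (hdom n) (hnn n) hξ hξ0 (hlen n)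
  set L : Ω → ℝ := fun ω => ⨆ n, ζ n ω with hLdef
  have haeT : ∀ᵐ ω ∂μ, Monotone (fun n => ζ n ω) ∧
      Tendsto (fun n => ζ n ω) atTop (nhds (L ω)) ∧ L ω ≤ 𝔈.cond S ξ ω ∧ 0 ≤ ζ 0 ω := by
    have h1 : ∀ᵐ ω ∂μ, ∀ n, ζ n ω ≤ ζ (n + 1) ω := ae_all_iff.mpr hζstep
    have h2 : ∀ᵐ ω ∂μ, ∀ n, ζ n ω ≤ 𝔈.cond S ξ ω := ae_all_iff.mpr hζle
    filter_upwards [h1, h2, hζnn 0] with ω h1 h2 h3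
    have hmon : Monotone fun n => ζ n ω := monotone_nat_of_le_succ h1
    have hb : BddAbove (Set.range fun n => ζ n ω) :=
      ⟨𝔈.cond S ξ ω, by rintro x ⟨n, rfl⟩; exact h2 n⟩
    exact ⟨hmon, tendsto_atTop_ciSup hmon hb, ciSup_le h2, h3⟩
  have hLaem : AEMeasurable L μ :=
    aemeasurable_of_tendsto_metrizable_ae' (fun n => (hζmeas n).aemeasurable)
      (haeT.mono fun ω h => h.2.1)
  set L' : Ω → ℝ := hLaem.mk L with hL'def
  have hLL' : L =ᵐ[μ] L' := hLaem.ae_eq_mk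
  have hL'meas : Measurable L' := hLaem.measurable_mk
  have hL'le : L' ≤ᵐ[μ] 𝔈.cond S ξ := by
    filter_upwards [haeT, hLL'] with ω h he
    rw [← he]; exact h.2.2.1
  have hL'nn : 0 ≤ᵐ[μ] L' := by
    filter_upwards [haeT, hLL'] with ω h he
    rw [← he]
    have h4 : ζ 0 ω ≤ L ω :=
      ge_of_tendsto h.2.1 (Filter.eventually_atTop.mpr ⟨0, fun m _ => h.1 (Nat.zero_le m)⟩)
    exact le_trans h.2.2.2 h4
  have hL'dom : L' ∈ 𝔈.Dom := by
    refine 𝔈.sandwich_mem hedom ?_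
    filter_upwards [hL'le, hL'nn] with ω h1 h2
    exact ⟨h2, h1⟩
  have hζconv' : ∀ᵐ ω ∂μ, Monotone (fun n => ζ n ω) ∧
      Tendsto (fun n => ζ n ω) atTop (nhds (L' ω)) := by
    filter_upwards [haeT, hLL'] with ω h he
    rw [← he]; exact ⟨h.1, h.2.1⟩
  have hT1 := 𝔈.e0_tendsto hT0 hζdom hζnn hζmeas hL'dom hL'nn hL'meas hζconv'
  have hT2 := 𝔈.e0_tendsto hT0 hdom hnn hmeas hξ hξ0 hξm hconv
  have hE0eq : ∀ n, 𝔈.E0 (ζ n) = 𝔈.E0 (ξs n) := fun n =>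
    𝔈.E0_cond hT0 hS (hdom n) (hnn n)
  have hT1' : Tendsto (fun n => 𝔈.E0 (ξs n)) atTop (nhds (𝔈.E0 L')) := by
    refine hT1.congr fun n => hE0eq n
  have hE0L' : 𝔈.E0 L' = 𝔈.E0 ξ := tendsto_nhds_unique hT1' hT2
  have hE0e : 𝔈.E0 (𝔈.cond S ξ) = 𝔈.E0 ξ := 𝔈.E0_cond hT0 hS hξ hξ0
  have hcond0 : 𝔈.cond (fun _ => 0) L' =ᵐ[μ] 𝔈.cond (fun _ => 0) (𝔈.cond S ξ) := by
    have e1 := 𝔈.E0_eq hL'dom hL'nn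
    have e2 := 𝔈.E0_eq hedom henn
    filter_upwards [e1, e2] with ω e1 e2
    rw [e1, e2, hE0L', hE0e]
  have hfinal : L' =ᵐ[μ] 𝔈.cond S ξ :=
    𝔈.strict_mono (stop0_zero hT0) hL'dom hL'nn hedom henn hL'le hcond0
  filter_upwards [haeT, hLL', hfinal] with ω h he hf
  rw [← hf, ← he]
  exact h.2.1

end FExp

end Aux

/-- reduction of the double stopping problem to a single stopping
problem: `v(S) = u(S)` a.s. -/
theorem double_eq_single [IsProbabilityMeasure μ] (hT : 0 < T) (𝔈 : FExp μ T ℱ)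
    (X : (Ω → ℝ) → (Ω → ℝ) → Ω → ℝ) (hX : Biadmissible 𝔈 X)
    (hbdd : BddReward2E0 𝔈 X)
    (v u₁ u₂ Xt u : (Ω → ℝ) → Ω → ℝ)
    (hv : IsValueFam2 𝔈 X v) (hu₁ : IsU1 𝔈 X u₁) (hu₂ : IsU2 𝔈 X u₂)
    (hXt : ∀ θ : Ω → ℝ, Xt θ = fun ω => max (u₁ θ ω) (u₂ θ ω))
    (hu : IsValueFam 𝔈 Xt u) :
    ∀ S : Ω → ℝ, Stop0 ℱ T S → v S =ᵐ[μ] u S := by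
  have hT0 : (0 : ℝ) ≤ T := hT.le
  obtain ⟨C, hC⟩ := hbdd
  -- basic facts about the reward family
  have hXdom : ∀ {τ σ : Ω → ℝ}, Stop0 ℱ T τ → Stop0 ℱ T σ → X τ σ ∈ 𝔈.Dom :=
    fun hτ hσ => (hX.1 _ _ hτ hσ).1
  have hXnn : ∀ {τ σ : Ω → ℝ}, Stop0 ℱ T τ → Stop0 ℱ T σ → 0 ≤ᵐ[μ] X τ σ :=
    fun hτ hσ => (hX.1 _ _ hτ hσ).2.1
  have hindnn : ∀ (A : Set Ω) (ξ : Ω → ℝ), 0 ≤ᵐ[μ] ξ → 0 ≤ᵐ[μ] A.indicator ξ := by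
    intro A ξ h
    filter_upwards [h] with ω hω
    exact Set.indicator_apply_nonneg fun _ => hω
  have hchain : ∀ (τ : Ω → ℝ) (hτ : Stop0 ℱ T τ) (A : Set Ω),
      MeasurableSet[hτ.1.measurableSpace] A →
      ∀ ξ η : Ω → ℝ, ξ ∈ 𝔈.Dom → 0 ≤ᵐ[μ] ξ → η ∈ 𝔈.Dom → 0 ≤ᵐ[μ] η →
      A.indicator ξ =ᵐ[μ] A.indicator η →
      A.indicator (𝔈.cond τ ξ) =ᵐ[μ] A.indicator (𝔈.cond τ η) := by
    intro τ hτ A hA ξ η hξ hξ0 hη hη0 hind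
    have hAm : MeasurableSet A := hτ.1.measurableSpace_le _ hA
    exact (𝔈.zero_one hτ hξ hξ0 hA).symm.trans
      ((𝔈.cond_congr hτ (𝔈.indicator_mem hξ hAm) (hindnn A ξ hξ0)
        (𝔈.indicator_mem hη hAm) (hindnn A η hη0) hind).trans (𝔈.zero_one hτ hη hη0 hA))
  have hindcong : ∀ (A : Set Ω) (P Q P' Q' : Ω → ℝ), Stop0 ℱ T P → Stop0 ℱ T Q →
      Stop0 ℱ T P' → Stop0 ℱ T Q' → (∀ ω ∈ A, P ω = P' ω) → (∀ ω ∈ A, Q ω = Q' ω) →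
      A.indicator (X P Q) =ᵐ[μ] A.indicator (X P' Q') := by
    intro A P Q P' Q' hP hQ hP' hQ' h1 h2
    filter_upwards [hX.2 P Q P' Q' hP hQ hP' hQ'] with ω h
    by_cases hω : ω ∈ A
    · rw [Set.indicator_of_mem hω, Set.indicator_of_mem hω, h (h1 ω hω) (h2 ω hω)]
    · rw [Set.indicator_of_notMem hω, Set.indicator_of_notMem hω]
  -- The key construction, for each stopping time τ ∈ S_0.
  have hKey : ∀ τ : Ω → ℝ, ∀ hτ : Stop0 ℱ T τ,
      (Xt τ ∈ 𝔈.Dom ∧ 0 ≤ᵐ[μ] Xt τ) ∧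
      ∃ (W : Ω → ℝ) (P Q : ℕ → Ω → ℝ), Measurable W ∧ W ∈ 𝔈.Dom ∧ 0 ≤ᵐ[μ] W ∧
        W =ᵐ[μ] Xt τ ∧ (∀ n, IsStopIn ℱ T τ (P n)) ∧ (∀ n, IsStopIn ℱ T τ (Q n)) ∧
        ∀ᵐ ω ∂μ, Monotone (fun n => 𝔈.cond τ (X (P n) (Q n)) ω) ∧
          Tendsto (fun n => 𝔈.cond τ (X (P n) (Q n)) ω) atTop (nhds (W ω)) := by
    intro τ hτ
    have hu₁E := hu₁ τ hτ
    have hu₂E := hu₂ τ hτ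
    have hself : IsStopIn ℱ T τ τ := isStopIn_refl hτ
    -- nonnegativity of u₁ τ and Xt τ
    have hu₁nn : 0 ≤ᵐ[μ] u₁ τ := by
      have hle : 𝔈.cond τ (X τ τ) ≤ᵐ[μ] u₁ τ := hu₁E.1 _ ⟨τ, hself, rfl⟩
      have hnn := 𝔈.cond_nonneg hτ (hXdom hτ hτ) (hXnn hτ hτ)
      filter_upwards [hle, hnn] with ω h1 h2 using le_trans h2 h1
    have hXtnn : 0 ≤ᵐ[μ] Xt τ := by
      filter_upwards [hu₁nn] with ω h
      have he : Xt τ ω = max (u₁ τ ω) (u₂ τ ω) := congrFun (hXt τ) ω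
      rw [he]
      exact le_trans h (le_max_left _ _)
    -- the auxiliary family
    set 𝒢 : Set (Ω → ℝ) := {g | ∃ A : Set Ω, ∃ ρ σ : Ω → ℝ,
      MeasurableSet[hτ.1.measurableSpace] A ∧ IsStopIn ℱ T τ ρ ∧ IsStopIn ℱ T τ σ ∧
      g = 𝔈.cond τ (X (pc A ρ τ) (pc A τ σ))} with h𝒢
    have hstop : ∀ {A : Set Ω} {ρ σ : Ω → ℝ},
        MeasurableSet[hτ.1.measurableSpace] A → IsStopIn ℱ T τ ρ → IsStopIn ℱ T τ σ →
        IsStopIn ℱ T τ (pc A ρ τ) ∧ IsStopIn ℱ T τ (pc A τ σ) :=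
      fun hA hρ hσ => ⟨isStopIn_pc hτ hρ hself hA, isStopIn_pc hτ hself hσ hA⟩
    have hGprops : ∀ g ∈ 𝒢, g ∈ 𝔈.Dom ∧ 0 ≤ᵐ[μ] g ∧
        Measurable[hτ.1.measurableSpace] g := by
      rintro g ⟨A, ρ, σ, hA, hρ, hσ, rfl⟩
      obtain ⟨hP, hQ⟩ := hstop hA hρ hσ
      have hPs := stop0_of_isStopIn hτ hP
      have hQs := stop0_of_isStopIn hτ hQ
      exact ⟨𝔈.cond_mem hτ (hXdom hPs hQs) (hXnn hPs hQs),
        𝔈.cond_nonneg hτ (hXdom hPs hQs) (hXnn hPs hQs),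
        𝔈.cond_adapted hτ (hXdom hPs hQs) (hXnn hPs hQs)⟩
    have hGmeas : ∀ g ∈ 𝒢, Measurable g :=
      fun g hg => ((hGprops g hg).2.2).mono hτ.1.measurableSpace_le le_rfl
    -- upper bound : every member of 𝒢 is a.e. below Xt τ
    have hGub : ∀ g ∈ 𝒢, g ≤ᵐ[μ] Xt τ := by
      rintro g ⟨A, ρ, σ, hA, hρ, hσ, rfl⟩
      obtain ⟨hP, hQ⟩ := hstop hA hρ hσ
      have hPs := stop0_of_isStopIn hτ hP
      have hQs := stop0_of_isStopIn hτ hQ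
      have hρs := stop0_of_isStopIn hτ hρ
      have hσs := stop0_of_isStopIn hτ hσ
      have hcA : A.indicator (𝔈.cond τ (X (pc A ρ τ) (pc A τ σ))) =ᵐ[μ]
          A.indicator (𝔈.cond τ (X ρ τ)) :=
        hchain τ hτ A hA _ _ (hXdom hPs hQs) (hXnn hPs hQs) (hXdom hρs hτ) (hXnn hρs hτ)
          (hindcong A _ _ ρ τ hPs hQs hρs hτ (fun ω hω => pc_of_mem hω)
            (fun ω hω => pc_of_mem hω))
      have hcAc : Aᶜ.indicator (𝔈.cond τ (X (pc A ρ τ) (pc A τ σ))) =ᵐ[μ]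
          Aᶜ.indicator (𝔈.cond τ (X τ σ)) :=
        hchain τ hτ Aᶜ hA.compl _ _ (hXdom hPs hQs) (hXnn hPs hQs) (hXdom hτ hσs) (hXnn hτ hσs)
          (hindcong Aᶜ _ _ τ σ hPs hQs hτ hσs
            (fun ω hω => pc_of_not_mem hω) (fun ω hω => pc_of_not_mem hω))
      have hle₁ : 𝔈.cond τ (X ρ τ) ≤ᵐ[μ] u₁ τ := hu₁E.1 _ ⟨ρ, hρ, rfl⟩
      have hle₂ : 𝔈.cond τ (X τ σ) ≤ᵐ[μ] u₂ τ := hu₂E.1 _ ⟨σ, hσ, rfl⟩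
      filter_upwards [hcA, hcAc, hle₁, hle₂] with ω hcA hcAc hle₁ hle₂
      have he : Xt τ ω = max (u₁ τ ω) (u₂ τ ω) := congrFun (hXt τ) ω
      rw [he]
      by_cases hω : ω ∈ A
      · have e1 : 𝔈.cond τ (X (pc A ρ τ) (pc A τ σ)) ω = 𝔈.cond τ (X ρ τ) ω := by
          rw [← Set.indicator_of_mem hω (𝔈.cond τ (X (pc A ρ τ) (pc A τ σ))), hcA,
            Set.indicator_of_mem hω]
        rw [e1]
        exact le_trans hle₁ (le_max_left _ _)
      · have hω' : ω ∈ Aᶜ := hω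
        have e1 : 𝔈.cond τ (X (pc A ρ τ) (pc A τ σ)) ω = 𝔈.cond τ (X τ σ) ω := by
          rw [← Set.indicator_of_mem hω' (𝔈.cond τ (X (pc A ρ τ) (pc A τ σ))), hcAc,
            Set.indicator_of_mem hω']
        rw [e1]
        exact le_trans hle₂ (le_max_right _ _)
    -- directedness of 𝒢
    have hGdir : ∀ f ∈ 𝒢, ∀ g ∈ 𝒢, ∃ h, h ∈ 𝒢 ∧
        (fun ω => max (f ω) (g ω)) ≤ᵐ[μ] h := by
      rintro f hf g hg
      obtain ⟨A, ρ, σ, hA, hρ, hσ, hfe⟩ := hf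
      obtain ⟨A', ρ', σ', hA', hρ', hσ', hge⟩ := hg
      have hfm := (hGprops f (⟨A, ρ, σ, hA, hρ, hσ, hfe⟩ : f ∈ 𝒢)).2.2
      have hgm := (hGprops g (⟨A', ρ', σ', hA', hρ', hσ', hge⟩ : g ∈ 𝒢)).2.2
      set B : Set Ω := {ω | g ω ≤ f ω} with hBdef
      have hB : MeasurableSet[hτ.1.measurableSpace] B := measurableSet_le hgm hfm
      set A'' : Set Ω := (B ∩ A) ∪ (Bᶜ ∩ A') with hA''def
      have hA'' : MeasurableSet[hτ.1.measurableSpace] A'' :=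
        ((hB.inter hA).union (hB.compl.inter hA'))
      have hρ'' : IsStopIn ℱ T τ (pc B ρ ρ') := isStopIn_pc hτ hρ hρ' hB
      have hσ'' : IsStopIn ℱ T τ (pc B σ σ') := isStopIn_pc hτ hσ hσ' hB
      set P'' : Ω → ℝ := pc A'' (pc B ρ ρ') τ with hP''def
      set Q'' : Ω → ℝ := pc A'' τ (pc B σ σ') with hQ''def
      have hmemA'' : ∀ ω, ω ∈ B → (ω ∈ A'' ↔ ω ∈ A) := by
        intro ω hω
        constructor
        · rintro (⟨_, h⟩ | ⟨h, _⟩)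
          · exact h
          · exact absurd hω h
        · intro h; exact Or.inl ⟨hω, h⟩
      have hmemA''c : ∀ ω, ω ∉ B → (ω ∈ A'' ↔ ω ∈ A') := by
        intro ω hω
        constructor
        · rintro (⟨h, _⟩ | ⟨_, h⟩)
          · exact absurd h hω
          · exact h
        · intro h; exact Or.inr ⟨hω, h⟩
      have hPid : ∀ ω ∈ B, P'' ω = pc A ρ τ ω := by
        intro ω hω
        rw [hP''def]
        by_cases hA1 : ω ∈ A
        · rw [pc_of_mem ((hmemA'' ω hω).mpr hA1), pc_of_mem hω, pc_of_mem hA1]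
        · rw [pc_of_not_mem (fun h => hA1 ((hmemA'' ω hω).mp h)), pc_of_not_mem hA1]
      have hQid : ∀ ω ∈ B, Q'' ω = pc A τ σ ω := by
        intro ω hω
        rw [hQ''def]
        by_cases hA1 : ω ∈ A
        · rw [pc_of_mem ((hmemA'' ω hω).mpr hA1), pc_of_mem hA1]
        · rw [pc_of_not_mem (fun h => hA1 ((hmemA'' ω hω).mp h)), pc_of_mem hω,
            pc_of_not_mem hA1]
      have hPid' : ∀ ω ∈ Bᶜ, P'' ω = pc A' ρ' τ ω := by
        intro ω hω
        rw [hP''def]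
        by_cases hA1 : ω ∈ A'
        · rw [pc_of_mem ((hmemA''c ω hω).mpr hA1), pc_of_not_mem hω, pc_of_mem hA1]
        · rw [pc_of_not_mem (fun h => hA1 ((hmemA''c ω hω).mp h)), pc_of_not_mem hA1]
      have hQid' : ∀ ω ∈ Bᶜ, Q'' ω = pc A' τ σ' ω := by
        intro ω hω
        rw [hQ''def]
        by_cases hA1 : ω ∈ A'
        · rw [pc_of_mem ((hmemA''c ω hω).mpr hA1), pc_of_mem hA1]
        · rw [pc_of_not_mem (fun h => hA1 ((hmemA''c ω hω).mp h)), pc_of_not_mem hω,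
            pc_of_not_mem hA1]
      obtain ⟨hP''st, hQ''st⟩ := hstop hA'' hρ'' hσ''
      have hP''s := stop0_of_isStopIn hτ hP''st
      have hQ''s := stop0_of_isStopIn hτ hQ''st
      obtain ⟨hPst, hQst⟩ := hstop hA hρ hσ
      obtain ⟨hPst', hQst'⟩ := hstop hA' hρ' hσ'
      have hPs := stop0_of_isStopIn hτ hPst
      have hQs := stop0_of_isStopIn hτ hQst
      have hPs' := stop0_of_isStopIn hτ hPst'
      have hQs' := stop0_of_isStopIn hτ hQst'
      refine ⟨𝔈.cond τ (X P'' Q''), ⟨A'', pc B ρ ρ', pc B σ σ', hA'', hρ'', hσ'', rfl⟩, ?_⟩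
      have hcB : B.indicator (𝔈.cond τ (X P'' Q'')) =ᵐ[μ] B.indicator f := by
        rw [hfe]
        exact hchain τ hτ B hB _ _ (hXdom hP''s hQ''s) (hXnn hP''s hQ''s) (hXdom hPs hQs)
          (hXnn hPs hQs) (hindcong B _ _ _ _ hP''s hQ''s hPs hQs hPid hQid)
      have hcBc : Bᶜ.indicator (𝔈.cond τ (X P'' Q'')) =ᵐ[μ] Bᶜ.indicator g := by
        rw [hge]
        exact hchain τ hτ Bᶜ hB.compl _ _ (hXdom hP''s hQ''s) (hXnn hP''s hQ''s)
          (hXdom hPs' hQs') (hXnn hPs' hQs')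
          (hindcong Bᶜ _ _ _ _ hP''s hQ''s hPs' hQs' hPid' hQid')
      filter_upwards [hcB, hcBc] with ω hcB hcBc
      by_cases hω : ω ∈ B
      · have hfg : g ω ≤ f ω := hω
        have e1 : 𝔈.cond τ (X P'' Q'') ω = f ω := by
          rw [← Set.indicator_of_mem hω (𝔈.cond τ (X P'' Q'')), hcB,
            Set.indicator_of_mem hω]
        rw [e1]
        exact max_le le_rfl hfg
      · have hω' : ω ∈ Bᶜ := hω
        have hfg : f ω ≤ g ω := le_of_not_ge hω
        have e1 : 𝔈.cond τ (X P'' Q'') ω = g ω := by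
          rw [← Set.indicator_of_mem hω' (𝔈.cond τ (X P'' Q'')), hcBc,
            Set.indicator_of_mem hω']
        rw [e1]
        exact max_le hfg le_rfl
    -- 𝒢 is nonempty
    have hne : 𝒢.Nonempty :=
      ⟨𝔈.cond τ (X (pc ∅ τ τ) (pc ∅ τ τ)),
        ⟨∅, τ, τ, @MeasurableSet.empty Ω hτ.1.measurableSpace, hself, hself, rfl⟩⟩
    -- Xt τ is an essential supremum of 𝒢
    have hXtsup : IsEssSupFam μ 𝒢 (Xt τ) := by
      refine ⟨hGub, fun h hh => ?_⟩
      have h1 : u₁ τ ≤ᵐ[μ] h := by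
        refine hu₁E.2 h ?_
        rintro g ⟨ρ, hρ, rfl⟩
        refine hh _ ⟨Set.univ, ρ, τ, @MeasurableSet.univ Ω hτ.1.measurableSpace, hρ, hself, ?_⟩
        rw [pc_univ, pc_univ]
      have h2 : u₂ τ ≤ᵐ[μ] h := by
        refine hu₂E.2 h ?_
        rintro g ⟨σ, hσ, rfl⟩
        refine hh _ ⟨∅, τ, σ, @MeasurableSet.empty Ω hτ.1.measurableSpace, hself, hσ, ?_⟩
        rw [pc_empty, pc_empty]
      filter_upwards [h1, h2] with ω h1 h2
      have he : Xt τ ω = max (u₁ τ ω) (u₂ τ ω) := congrFun (hXt τ) ω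
      rw [he]
      exact max_le h1 h2
    obtain ⟨F, hFmem, hFconv⟩ := exists_monotone_seq_isEssSupFam hne hGmeas hGdir hXtsup
    have hFd : ∀ n, F n ∈ 𝔈.Dom ∧ 0 ≤ᵐ[μ] F n := fun n =>
      ⟨(hGprops _ (hFmem n)).1, (hGprops _ (hFmem n)).2.1⟩
    have hFms : ∀ n, Measurable (F n) := fun n => hGmeas _ (hFmem n)
    have hGE0 : ∀ g ∈ 𝒢, 𝔈.E0 g ≤ C := by
      rintro g ⟨A, ρ, σ, hA, hρ, hσ, rfl⟩
      obtain ⟨hP, hQ⟩ := hstop hA hρ hσ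
      have hPs := stop0_of_isStopIn hτ hP
      have hQs := stop0_of_isStopIn hτ hQ
      rw [𝔈.E0_cond hT0 hτ (hXdom hPs hQs) (hXnn hPs hQs)]
      exact hC _ _ hPs hQs
    have hXtdom : Xt τ ∈ 𝔈.Dom := by
      refine 𝔈.h5 (fun n => (hFd n).1) (fun n => (hFd n).2)
        (hFconv.mono fun ω h => h.2) ⟨C, ?_⟩
      exact Filter.Frequently.of_forall fun n => hGE0 _ (hFmem n)
    have hVaem : AEMeasurable (Xt τ) μ :=
      aemeasurable_of_tendsto_metrizable_ae' (fun n => (hFms n).aemeasurable)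
        (hFconv.mono fun ω h => h.2)
    set W : Ω → ℝ := hVaem.mk (Xt τ) with hWdef
    have hWeq : Xt τ =ᵐ[μ] W := hVaem.ae_eq_mk
    have hWmeas : Measurable W := hVaem.measurable_mk
    have hWnn : 0 ≤ᵐ[μ] W := by
      filter_upwards [hWeq, hXtnn] with ω h1 h2
      rw [← h1]; exact h2
    have hWdom : W ∈ 𝔈.Dom := by
      refine 𝔈.sandwich_mem hXtdom ?_
      filter_upwards [hWeq, hWnn] with ω h1 h2
      exact ⟨h2, le_of_eq h1.symm⟩
    have hdata : ∀ n, ∃ P Q : Ω → ℝ, IsStopIn ℱ T τ P ∧ IsStopIn ℱ T τ Q ∧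
        F n = 𝔈.cond τ (X P Q) := by
      intro n
      obtain ⟨A, ρ, σ, hA, hρ, hσ, he⟩ := hFmem n
      obtain ⟨hP, hQ⟩ := hstop hA hρ hσ
      exact ⟨_, _, hP, hQ, he⟩
    choose P Q hPst hQst hFeq using hdata
    refine ⟨⟨hXtdom, hXtnn⟩, W, P, Q, hWmeas, hWdom, hWnn, hWeq.symm, hPst, hQst, ?_⟩
    filter_upwards [hFconv, hWeq] with ω h h1
    have he : (fun n => 𝔈.cond τ (X (P n) (Q n)) ω) = fun n => F n ω := by
      funext n; rw [← hFeq n]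
    rw [he]
    exact ⟨h.1, h1 ▸ h.2⟩
  -- main argument
  intro S hS
  have hvu : v S ≤ᵐ[μ] u S := by
    refine (hv S hS).2 (u S) ?_
    rintro g ⟨τ₁, τ₂, h₁, h₂, rfl⟩
    have hτ₁s := stop0_of_isStopIn hS h₁
    have hτ₂s := stop0_of_isStopIn hS h₂
    have hτst : IsStoppingTime ℱ (fun ω => min (τ₁ ω) (τ₂ ω)) := hτ₁s.1.min hτ₂s.1
    have hτS : IsStopIn ℱ T S (fun ω => min (τ₁ ω) (τ₂ ω)) :=
      ⟨hτst, fun ω => le_min (h₁.2.1 ω) (h₂.2.1 ω),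
        fun ω => le_trans (min_le_left _ _) (hτ₁s.2.2 ω)⟩
    have hτ0 : Stop0 ℱ T (fun ω => min (τ₁ ω) (τ₂ ω)) := stop0_of_isStopIn hS hτS
    have hAs : MeasurableSet[hτ0.1.measurableSpace] {ω | τ₁ ω ≤ τ₂ ω} := by
      have hiff := IsStoppingTime.measurableSet_min_iff hτ₁s.1 hτ₂s.1 {ω | τ₁ ω ≤ τ₂ ω}
      have hle1 := IsStoppingTime.measurableSet_le_stopping_time hτ₁s.1 hτ₂s.1
      have hle2 := IsStoppingTime.measurableSet_stopping_time_le hτ₁s.1 hτ₂s.1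
      simp only [WithTop.coe_le_coe] at hle1 hle2
      exact hiff.2 ⟨hle1, hle2⟩
    obtain ⟨⟨hXtdom, hXtnn⟩, -⟩ := hKey _ hτ0
    have hτ₂τ : IsStopIn ℱ T (fun ω => min (τ₁ ω) (τ₂ ω)) τ₂ :=
      ⟨hτ₂s.1, fun ω => min_le_right _ _, hτ₂s.2.2⟩
    have hτ₁τ : IsStopIn ℱ T (fun ω => min (τ₁ ω) (τ₂ ω)) τ₁ :=
      ⟨hτ₁s.1, fun ω => min_le_left _ _, hτ₁s.2.2⟩
    have hcondle : 𝔈.cond (fun ω => min (τ₁ ω) (τ₂ ω)) (X τ₁ τ₂) ≤ᵐ[μ]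
        Xt (fun ω => min (τ₁ ω) (τ₂ ω)) := by
      have hu₁E := hu₁ _ hτ0
      have hu₂E := hu₂ _ hτ0
      have hcA : ({ω | τ₁ ω ≤ τ₂ ω}).indicator
            (𝔈.cond (fun ω => min (τ₁ ω) (τ₂ ω)) (X τ₁ τ₂)) =ᵐ[μ]
          ({ω | τ₁ ω ≤ τ₂ ω}).indicator
            (𝔈.cond (fun ω => min (τ₁ ω) (τ₂ ω)) (X (fun ω => min (τ₁ ω) (τ₂ ω)) τ₂)) :=
        hchain _ hτ0 _ hAs _ _ (hXdom hτ₁s hτ₂s) (hXnn hτ₁s hτ₂s) (hXdom hτ0 hτ₂s)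
          (hXnn hτ0 hτ₂s)
          (hindcong _ _ _ _ _ hτ₁s hτ₂s hτ0 hτ₂s
            (fun ω hω => (min_eq_left hω).symm) (fun ω hω => rfl))
      have hcAc : ({ω | τ₁ ω ≤ τ₂ ω}ᶜ).indicator
            (𝔈.cond (fun ω => min (τ₁ ω) (τ₂ ω)) (X τ₁ τ₂)) =ᵐ[μ]
          ({ω | τ₁ ω ≤ τ₂ ω}ᶜ).indicator
            (𝔈.cond (fun ω => min (τ₁ ω) (τ₂ ω)) (X τ₁ (fun ω => min (τ₁ ω) (τ₂ ω)))) :=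
        hchain _ hτ0 _ hAs.compl _ _ (hXdom hτ₁s hτ₂s) (hXnn hτ₁s hτ₂s)
          (hXdom hτ₁s hτ0) (hXnn hτ₁s hτ0)
          (hindcong _ _ _ _ _ hτ₁s hτ₂s hτ₁s hτ0 (fun ω hω => rfl)
            (fun ω hω => (min_eq_right (le_of_not_ge (fun h => hω h))).symm))
      have hle₂ : 𝔈.cond (fun ω => min (τ₁ ω) (τ₂ ω))
            (X (fun ω => min (τ₁ ω) (τ₂ ω)) τ₂) ≤ᵐ[μ] u₂ (fun ω => min (τ₁ ω) (τ₂ ω)) :=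
        hu₂E.1 _ ⟨τ₂, hτ₂τ, rfl⟩
      have hle₁ : 𝔈.cond (fun ω => min (τ₁ ω) (τ₂ ω))
            (X τ₁ (fun ω => min (τ₁ ω) (τ₂ ω))) ≤ᵐ[μ] u₁ (fun ω => min (τ₁ ω) (τ₂ ω)) :=
        hu₁E.1 _ ⟨τ₁, hτ₁τ, rfl⟩
      filter_upwards [hcA, hcAc, hle₁, hle₂] with ω hcA hcAc hle₁ hle₂
      have he : Xt (fun ω => min (τ₁ ω) (τ₂ ω)) ω
          = max (u₁ (fun ω => min (τ₁ ω) (τ₂ ω)) ω) (u₂ (fun ω => min (τ₁ ω) (τ₂ ω)) ω) :=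
        congrFun (hXt _) ω
      rw [he]
      by_cases hω : ω ∈ {ω | τ₁ ω ≤ τ₂ ω}
      · have e1 : 𝔈.cond (fun ω => min (τ₁ ω) (τ₂ ω)) (X τ₁ τ₂) ω
            = 𝔈.cond (fun ω => min (τ₁ ω) (τ₂ ω)) (X (fun ω => min (τ₁ ω) (τ₂ ω)) τ₂) ω := by
          rw [← Set.indicator_of_mem hω
            (𝔈.cond (fun ω => min (τ₁ ω) (τ₂ ω)) (X τ₁ τ₂)), hcA, Set.indicator_of_mem hω]
        rw [e1]
        exact le_trans hle₂ (le_max_right _ _)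
      · have hω' : ω ∈ {ω | τ₁ ω ≤ τ₂ ω}ᶜ := hω
        have e1 : 𝔈.cond (fun ω => min (τ₁ ω) (τ₂ ω)) (X τ₁ τ₂) ω
            = 𝔈.cond (fun ω => min (τ₁ ω) (τ₂ ω)) (X τ₁ (fun ω => min (τ₁ ω) (τ₂ ω))) ω := by
          rw [← Set.indicator_of_mem hω'
            (𝔈.cond (fun ω => min (τ₁ ω) (τ₂ ω)) (X τ₁ τ₂)), hcAc, Set.indicator_of_mem hω']
        rw [e1]
        exact le_trans hle₁ (le_max_left _ _)
    have htc := 𝔈.time_consistent hS hτ0 hτS.2.1 (hXdom hτ₁s hτ₂s) (hXnn hτ₁s hτ₂s)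
    have hmono := 𝔈.mono hS (𝔈.cond_mem hτ0 (hXdom hτ₁s hτ₂s) (hXnn hτ₁s hτ₂s))
      (𝔈.cond_nonneg hτ0 (hXdom hτ₁s hτ₂s) (hXnn hτ₁s hτ₂s)) hXtdom hXtnn hcondle
    have humem : 𝔈.cond S (Xt (fun ω => min (τ₁ ω) (τ₂ ω))) ≤ᵐ[μ] u S :=
      (hu S hS).1 _ ⟨_, hτS, rfl⟩
    filter_upwards [htc, hmono, humem] with ω htc hm hu'
    calc 𝔈.cond S (X τ₁ τ₂) ω
        = 𝔈.cond S (𝔈.cond (fun ω => min (τ₁ ω) (τ₂ ω)) (X τ₁ τ₂)) ω := htc.symm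
      _ ≤ 𝔈.cond S (Xt (fun ω => min (τ₁ ω) (τ₂ ω))) ω := hm
      _ ≤ u S ω := hu'
  have huv : u S ≤ᵐ[μ] v S := by
    refine (hu S hS).2 (v S) ?_
    rintro g ⟨τ, hτS, rfl⟩
    have hτ0 := stop0_of_isStopIn hS hτS
    obtain ⟨⟨hXtdom, hXtnn⟩, W, P, Q, hWmeas, hWdom, hWnn, hWXt, hPst, hQst, hconv⟩ :=
      hKey τ hτ0
    have hPs : ∀ n, Stop0 ℱ T (P n) := fun n => stop0_of_isStopIn hτ0 (hPst n)
    have hQs : ∀ n, Stop0 ℱ T (Q n) := fun n => stop0_of_isStopIn hτ0 (hQst n)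
    have hξdom : ∀ n, 𝔈.cond τ (X (P n) (Q n)) ∈ 𝔈.Dom := fun n =>
      𝔈.cond_mem hτ0 (hXdom (hPs n) (hQs n)) (hXnn (hPs n) (hQs n))
    have hξnn : ∀ n, 0 ≤ᵐ[μ] 𝔈.cond τ (X (P n) (Q n)) := fun n =>
      𝔈.cond_nonneg hτ0 (hXdom (hPs n) (hQs n)) (hXnn (hPs n) (hQs n))
    have hξms : ∀ n, Measurable (𝔈.cond τ (X (P n) (Q n))) := fun n =>
      (𝔈.cond_adapted hτ0 (hXdom (hPs n) (hQs n)) (hXnn (hPs n) (hQs n))).mono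
        hτ0.1.measurableSpace_le le_rfl
    have hct := 𝔈.cond_tendsto hT0 hS hξdom hξnn hξms hWdom hWnn hWmeas hconv
    have hvle : ∀ n, 𝔈.cond S (𝔈.cond τ (X (P n) (Q n))) ≤ᵐ[μ] v S := by
      intro n
      have htc := 𝔈.time_consistent hS hτ0 hτS.2.1 (hXdom (hPs n) (hQs n))
        (hXnn (hPs n) (hQs n))
      have hPS : IsStopIn ℱ T S (P n) :=
        ⟨(hPs n).1, fun ω => le_trans (hτS.2.1 ω) ((hPst n).2.1 ω), (hPs n).2.2⟩
      have hQS : IsStopIn ℱ T S (Q n) :=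
        ⟨(hQs n).1, fun ω => le_trans (hτS.2.1 ω) ((hQst n).2.1 ω), (hQs n).2.2⟩
      have hmem : 𝔈.cond S (X (P n) (Q n)) ≤ᵐ[μ] v S :=
        (hv S hS).1 _ ⟨P n, Q n, hPS, hQS, rfl⟩
      filter_upwards [htc, hmem] with ω h1 h2
      rw [h1]; exact h2
    have hWle : 𝔈.cond S W ≤ᵐ[μ] v S := by
      have hall : ∀ᵐ ω ∂μ, ∀ n, 𝔈.cond S (𝔈.cond τ (X (P n) (Q n))) ω ≤ v S ω :=
        ae_all_iff.mpr hvle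
      filter_upwards [hct, hall] with ω h1 h2
      exact le_of_tendsto h1 (Filter.Eventually.of_forall h2)
    have hcg := 𝔈.cond_congr hS hXtdom hXtnn hWdom hWnn hWXt.symm
    filter_upwards [hcg, hWle] with ω h1 h2
    rw [h1]; exact h2
  exact hvu.antisymm huv

end OptMultStop
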